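/- For every even n ≥ 4, the subgraph of QI(n,2) induced by uniform 2-partitions (both classes of size n/2) is a complete graph on (1/2)·C(n, n/2) vertices, and it is a core of QI(n,2): there is a homomorphism from QI(n,2) onto it. -/

import Mathlib

/-- Two partitions of `{1,…,n}` are qualitatively independent if every class of
one meets every class of the other. -/
def QIPart {n : ℕ} (P Q : Finpartition (Finset.univ : Finset (Fin n))) : Prop :=
  ∀ A ∈ P.parts, ∀ B ∈ Q.parts, (A ∩ B).Nonempty

/-- Vertices of `QI(n,2)`: 2-partitions of an `n`-set with both classes of size
at least 2. -/
def QIVertex (n k : ℕ) : Type :=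
  {P : Finpartition (Finset.univ : Finset (Fin n)) //
    P.parts.card = k ∧ ∀ A ∈ P.parts, k ≤ A.card}

/-- The qualitative independence graph. -/
def QIGraph (n k : ℕ) : SimpleGraph (QIVertex n k) :=
  SimpleGraph.fromRel fun P Q => QIPart P.1 Q.1

/-- The set of uniform vertices of `QI(n,2)`: both classes of size `n/2`. -/
def UniformVerts (n : ℕ) : Set (QIVertex n 2) :=
  {P | ∀ A ∈ P.1.parts, A.card = n / 2}


open Finset

/-- Window excess: opens minus closes on `[a, b)`, where `(` at positions not in `B`. -/
def ew (B : Finset ℕ) (a b : ℕ) : ℤ :=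
  (((Finset.Ico a b).filter (fun j => j ∉ B)).card : ℤ)
    - (((Finset.Ico a b).filter (fun j => j ∈ B)).card : ℤ)

lemma ew_empty (B : Finset ℕ) {a b : ℕ} (h : b ≤ a) : ew B a b = 0 := by
  rw [ew, Finset.Ico_eq_empty h.not_gt]; simp

lemma ew_add (B : Finset ℕ) {a b c : ℕ} (hab : a ≤ b) (hbc : b ≤ c) :
    ew B a c = ew B a b + ew B b c := by
  unfold ew
  rw [← Finset.Ico_union_Ico_eq_Ico hab hbc]
  rw [Finset.filter_union, Finset.filter_union,
    Finset.card_union_of_disjoint, Finset.card_union_of_disjoint]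
  · push_cast; ring
  · exact (Finset.Ico_disjoint_Ico_consecutive a b c).mono
      (Finset.filter_subset _ _) (Finset.filter_subset _ _)
  · exact (Finset.Ico_disjoint_Ico_consecutive a b c).mono
      (Finset.filter_subset _ _) (Finset.filter_subset _ _)

lemma ew_succ (B : Finset ℕ) {a b : ℕ} (hab : a ≤ b) :
    ew B a (b + 1) = ew B a b + (if b ∈ B then (-1 : ℤ) else 1) := by
  rw [ew_add B hab (Nat.le_succ b)]
  congr 1
  unfold ew
  rw [show Finset.Ico b (b+1) = {b} from by rw [Finset.Ico_add_one_right_eq_Icc, Finset.Icc_self]]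
  by_cases hb : b ∈ B <;> simp [Finset.filter_singleton, hb]

lemma ew_insert_mem (B : Finset ℕ) {p a b : ℕ} (hp : p ∉ B) (ha : a ≤ p) (hb : p < b) :
    ew (insert p B) a b = ew B a b - 2 := by
  unfold ew
  have h1 : (Finset.Ico a b).filter (fun j => j ∉ insert p B)
      = ((Finset.Ico a b).filter (fun j => j ∉ B)).erase p := by
    ext j; simp only [Finset.mem_filter, Finset.mem_erase, Finset.mem_insert]
    tauto
  have h2 : (Finset.Ico a b).filter (fun j => j ∈ insert p B)
      = insert p ((Finset.Ico a b).filter (fun j => j ∈ B)) := by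
    ext j; simp only [Finset.mem_filter, Finset.mem_insert, Finset.mem_Ico]
    constructor
    · rintro ⟨h, h' | h'⟩ <;> tauto
    · rintro (rfl | ⟨h, h'⟩) <;> simp_all <;> omega
  rw [h1, h2, Finset.card_erase_of_mem, Finset.card_insert_of_notMem]
  · have hc : 0 < #((Finset.Ico a b).filter (fun j => j ∉ B)) := by
      refine Finset.card_pos.2 ⟨p, ?_⟩
      simp [hp, Finset.mem_Ico]; omega
    push_cast [Nat.cast_sub hc]
    ring
  · simp [hp]
  · simp [hp, Finset.mem_Ico]; omega

lemma ew_insert_not_mem (B : Finset ℕ) {p a b : ℕ} (h : p < a ∨ b ≤ p) :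
    ew (insert p B) a b = ew B a b := by
  unfold ew
  have e1 : ∀ q : ℕ → Prop, ∀ inst : DecidablePred q,
      (∀ j, a ≤ j → j < b → (q j ↔ True)) → True = True := fun _ _ _ => rfl
  have h1 : (Finset.Ico a b).filter (fun j => j ∉ insert p B)
      = (Finset.Ico a b).filter (fun j => j ∉ B) := by
    apply Finset.filter_congr
    intro j hj
    simp only [Finset.mem_Ico] at hj
    have : j ≠ p := by omega
    simp [this]
  have h2 : (Finset.Ico a b).filter (fun j => j ∈ insert p B)
      = (Finset.Ico a b).filter (fun j => j ∈ B) := by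
    apply Finset.filter_congr
    intro j hj
    simp only [Finset.mem_Ico] at hj
    have : j ≠ p := by omega
    simp [this]
  rw [h1, h2]

/-- `p` is an unmatched open bracket of `B` (universe `[0,n)`). -/
def unmOpen (n : ℕ) (B : Finset ℕ) (p : ℕ) : Prop :=
  p < n ∧ p ∉ B ∧ ∀ s, p < s → s ≤ n → 1 ≤ ew B p s

/-- `p` is an unmatched close bracket of `C`. -/
def unmClose (n : ℕ) (C : Finset ℕ) (p : ℕ) : Prop :=
  p < n ∧ p ∈ C ∧ ∀ q, q ≤ p → ew C q (p + 1) ≤ -1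

/-- In any window of positive excess there is a locally-unmatched open bracket. -/
lemma exists_local (B : Finset ℕ) : ∀ k a t, t - a ≤ k → 1 ≤ ew B a t →
    ∃ r, a ≤ r ∧ r < t ∧ r ∉ B ∧ ∀ s, r < s → s ≤ t → 1 ≤ ew B r s := by
  intro k
  induction k with
  | zero =>
    intro a t ht h
    rw [ew_empty B (by omega)] at h
    exact absurd h (by norm_num)
  | succ k ih =>
    intro a t ht h
    have hat : a < t := by
      by_contra hc
      rw [ew_empty B (by omega)] at h; omega
    by_cases hgood : a ∉ B ∧ ∀ s, a < s → s ≤ t → 1 ≤ ew B a s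
    · exact ⟨a, le_refl a, hat, hgood.1, hgood.2⟩
    · -- find s0 with a < s0 ≤ t and ew B a s0 ≤ 0, then recurse
      have hex : ∃ s0, a < s0 ∧ s0 ≤ t ∧ ew B a s0 ≤ 0 := by
        by_cases haB : a ∈ B
        · exact ⟨a + 1, by omega, by omega, by
            rw [ew_succ B (le_refl a), ew_empty B (le_refl a)]; simp [haB]⟩
        · push_neg at hgood
          obtain ⟨s, hs1, hs2, hs3⟩ := hgood haB
          exact ⟨s, hs1, hs2, by omega⟩
      obtain ⟨s0, hs1, hs2, hs3⟩ := hex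
      have h' : 1 ≤ ew B s0 t := by
        have := ew_add B (le_of_lt hs1) hs2
        omega
      obtain ⟨r, hr1, hr2, hr3, hr4⟩ := ih s0 t (by omega) h'
      exact ⟨r, by omega, hr2, hr3, hr4⟩

lemma ew_total (n : ℕ) (B : Finset ℕ) (hB : B ⊆ Finset.range n) :
    ew B 0 n = (n : ℤ) - 2 * B.card := by
  unfold ew
  have h0 : Finset.Ico 0 n = Finset.range n := by
    ext j; simp
  rw [h0]
  have h2 : (Finset.range n).filter (fun j => j ∈ B) = B := by
    ext j
    simp only [Finset.mem_filter, Finset.mem_range]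
    exact ⟨fun h => h.2, fun h => ⟨Finset.mem_range.1 (hB h), h⟩⟩
  have h1 : ((Finset.range n).filter (fun j => j ∉ B)).card = n - B.card := by
    rw [Finset.filter_not, h2, Finset.card_sdiff_of_subset (by exact hB), Finset.card_range]
  rw [h1, h2]
  have := Finset.card_le_card hB
  rw [Finset.card_range] at this
  push_cast [Nat.cast_sub this]
  ring

lemma exists_unmOpen {n : ℕ} {B : Finset ℕ} (hB : B ⊆ Finset.range n)
    (h : 2 * B.card < n) : ∃ p, unmOpen n B p := by
  have h1 : 1 ≤ ew B 0 n := by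
    rw [ew_total n B hB]
    push_cast; omega
  obtain ⟨r, hr1, hr2, hr3, hr4⟩ := exists_local B n 0 n (by omega) h1
  exact ⟨r, hr2, hr3, hr4⟩

lemma close_of_open {n : ℕ} {B : Finset ℕ} {p : ℕ} (hp : unmOpen n B p)
    (hmin : ∀ q, q < p → ¬ unmOpen n B q) : unmClose n (insert p B) p := by
  obtain ⟨hpn, hpB, hpw⟩ := hp
  refine ⟨hpn, Finset.mem_insert_self p B, fun q hq => ?_⟩
  rw [ew_insert_mem B hpB hq (by omega)]
  -- suffices `ew B q (p+1) ≤ 1`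
  by_contra hc
  push_neg at hc
  have h2 : 2 ≤ ew B q (p + 1) := by omega
  have hq1 : 1 ≤ ew B q p := by
    have := ew_succ B hq
    simp [hpB] at this
    omega
  obtain ⟨r, hr1, hr2, hr3, hr4⟩ := exists_local B p q p (by omega) hq1
  refine hmin r hr2 ⟨by omega, hr3, fun s hs1 hs2 => ?_⟩
  by_cases hsp : s ≤ p
  · exact hr4 s hs1 hsp
  · have e1 : 1 ≤ ew B r p := hr4 p hr2 (le_refl p)
    have e2 : 1 ≤ ew B p s := hpw s (by omega) hs2
    have := ew_add B (le_of_lt hr2) (by omega : p ≤ s)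
    omega

lemma no_close_above {n : ℕ} {B : Finset ℕ} {p : ℕ} (hp : unmOpen n B p) :
    ∀ r, p < r → ¬ unmClose n (insert p B) r := by
  obtain ⟨hpn, hpB, hpw⟩ := hp
  rintro r hpr ⟨hrn, hrC, hrw⟩
  have h1 : ew (insert p B) (p + 1) (r + 1) ≤ -1 := hrw (p + 1) (by omega)
  rw [ew_insert_not_mem B (by omega)] at h1
  have h2 : 1 ≤ ew B p (r + 1) := hpw (r + 1) (by omega) (by omega)
  have h3 := ew_succ B (le_refl p)  -- not what we want
  have h4 : ew B p (r + 1) = ew B p (p + 1) + ew B (p + 1) (r + 1) :=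
    ew_add B (by omega) (by omega)
  have h5 : ew B p (p + 1) = 1 := by
    rw [ew_succ B (le_refl p), ew_empty B (le_refl p)]
    simp [hpB]
  omega

lemma insert_inj {n : ℕ} {B B' : Finset ℕ} {p p' : ℕ}
    (hp : unmOpen n B p) (hmin : ∀ q, q < p → ¬ unmOpen n B q)
    (hp' : unmOpen n B' p') (hmin' : ∀ q, q < p' → ¬ unmOpen n B' q)
    (heq : insert p B = insert p' B') : B = B' := by
  have c1 : unmClose n (insert p B) p := close_of_open hp hmin
  have c2 : unmClose n (insert p' B') p' := close_of_open hp' hmin'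
  have hpp' : p = p' := by
    rcases lt_trichotomy p p' with h | h | h
    · exact absurd (heq ▸ c2) (no_close_above hp p' h)
    · exact h
    · rw [heq] at c1
      exact absurd c1 (no_close_above hp' p h)
  subst hpp'
  have : (insert p B).erase p = (insert p B').erase p := by rw [heq]
  rwa [Finset.erase_insert hp.2.1, Finset.erase_insert hp'.2.1] at this

open Classical in
/-- One step up the symmetric chain: insert the leftmost unmatched open bracket. -/
noncomputable def ustep (n : ℕ) (B : Finset ℕ) : Finset ℕ :=
  if h : ∃ p, unmOpen n B p then insert (Nat.find h) B else B

lemma subset_ustep (n : ℕ) (B : Finset ℕ) : B ⊆ ustep n B := by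
  unfold ustep
  split
  · exact Finset.subset_insert _ B
  · exact le_refl B

lemma ustep_subset_range {n : ℕ} {B : Finset ℕ} (hB : B ⊆ Finset.range n) :
    ustep n B ⊆ Finset.range n := by
  classical
  unfold ustep
  split
  next h =>
    exact Finset.insert_subset (Finset.mem_range.2 (Nat.find_spec h).1) hB
  next => exact hB

lemma card_ustep {n : ℕ} {B : Finset ℕ} (h : ∃ p, unmOpen n B p) :
    (ustep n B).card = B.card + 1 := by
  classical
  rw [ustep, dif_pos h, Finset.card_insert_of_notMem (Nat.find_spec h).2.1]

lemma ustep_inj {n : ℕ} {B B' : Finset ℕ} (h : ∃ p, unmOpen n B p)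
    (h' : ∃ p, unmOpen n B' p) (heq : ustep n B = ustep n B') : B = B' := by
  classical
  rw [ustep, dif_pos h, ustep, dif_pos h'] at heq
  exact insert_inj (Nat.find_spec h) (fun q hq => Nat.find_min h hq)
    (Nat.find_spec h') (fun q hq => Nat.find_min h' hq) heq

lemma iter_props {n : ℕ} (hev : Even n) : ∀ (k : ℕ) (B : Finset ℕ),
    B ⊆ Finset.range n → B.card + k ≤ n / 2 →
    ((ustep n)^[k] B).card = B.card + k ∧ B ⊆ (ustep n)^[k] B ∧
      (ustep n)^[k] B ⊆ Finset.range n := by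
  intro k
  induction k with
  | zero => intro B hB hk; simpa using hB
  | succ k ih =>
    intro B hB hk
    have hex : ∃ p, unmOpen n B p := by
      apply exists_unmOpen hB
      obtain ⟨m, hm⟩ := hev
      omega
    have h1 : (ustep n B).card = B.card + 1 := card_ustep hex
    obtain ⟨ih1, ih2, ih3⟩ := ih (ustep n B) (ustep_subset_range hB) (by omega)
    rw [Function.iterate_succ_apply]
    exact ⟨by omega, (subset_ustep n B).trans ih2, ih3⟩

lemma iter_inj {n : ℕ} (hev : Even n) : ∀ (k : ℕ) (B B' : Finset ℕ),
    B ⊆ Finset.range n → B' ⊆ Finset.range n → B.card = B'.card →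
    B.card + k ≤ n / 2 → (ustep n)^[k] B = (ustep n)^[k] B' → B = B' := by
  intro k
  induction k with
  | zero => intro B B' _ _ _ _ h; simpa using h
  | succ k ih =>
    intro B B' hB hB' hc hk h
    have h2m : 2 * B.card < n := by obtain ⟨m, hm⟩ := hev; omega
    have hex : ∃ p, unmOpen n B p := exists_unmOpen hB h2m
    have hex' : ∃ p, unmOpen n B' p := exists_unmOpen hB' (hc ▸ h2m)
    rw [Function.iterate_succ_apply, Function.iterate_succ_apply] at h
    have := ih (ustep n B) (ustep n B') (ustep_subset_range hB)
      (ustep_subset_range hB') (by rw [card_ustep hex, card_ustep hex', hc])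
      (by rw [card_ustep hex]; omega) h
    exact ustep_inj hex hex' this

/-- Top of the symmetric chain through `B`. -/
noncomputable def chainTop (n : ℕ) (B : Finset ℕ) : Finset ℕ :=
  (ustep n)^[n / 2 - B.card] B

lemma chainTop_props {n : ℕ} (hev : Even n) {B : Finset ℕ}
    (hB : B ⊆ Finset.range n) (hc : B.card ≤ n / 2) :
    (chainTop n B).card = n / 2 ∧ B ⊆ chainTop n B ∧ chainTop n B ⊆ Finset.range n := by
  have := iter_props hev (n / 2 - B.card) B hB (by omega)
  rw [chainTop]
  exact ⟨by omega, this.2.1, this.2.2⟩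

lemma chainTop_cmp {n : ℕ} (hev : Even n) {B B' : Finset ℕ}
    (hB : B ⊆ Finset.range n) (hB' : B' ⊆ Finset.range n)
    (hcc : B.card ≤ B'.card) (hc' : B'.card ≤ n / 2)
    (heq : chainTop n B = chainTop n B') : B ⊆ B' := by
  have hdecomp : n / 2 - B.card = (n / 2 - B'.card) + (B'.card - B.card) := by omega
  rw [chainTop, chainTop, hdecomp, Function.iterate_add_apply] at heq
  have hmid := iter_props hev (B'.card - B.card) B hB (by omega)
  have : (ustep n)^[B'.card - B.card] B = B' := by
    apply iter_inj hev (n / 2 - B'.card) _ _ hmid.2.2 hB' (by omega) (by omega) heq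
  exact this ▸ hmid.2.1

/-- Transfer a `Finset (Fin n)` to a `Finset ℕ`. -/
def toN {n : ℕ} (A : Finset (Fin n)) : Finset ℕ :=
  A.map ⟨Fin.val, Fin.val_injective⟩

lemma toN_subset_range {n : ℕ} (A : Finset (Fin n)) : toN A ⊆ Finset.range n := by
  intro j hj
  simp only [toN, Finset.mem_map, Function.Embedding.coeFn_mk] at hj
  obtain ⟨i, _, rfl⟩ := hj
  exact Finset.mem_range.2 i.isLt

lemma toN_card {n : ℕ} (A : Finset (Fin n)) : (toN A).card = A.card :=
  Finset.card_map _

lemma mem_toN {n : ℕ} {A : Finset (Fin n)} {i : Fin n} : (i : ℕ) ∈ toN A ↔ i ∈ A := by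
  simp only [toN, Finset.mem_map, Function.Embedding.coeFn_mk]
  constructor
  · rintro ⟨j, hj, hji⟩
    rwa [← Fin.val_injective hji]
  · exact fun h => ⟨i, h, rfl⟩

lemma toN_inj {n : ℕ} {A B : Finset (Fin n)} (h : toN A = toN B) : A = B := by
  ext i
  rw [← mem_toN, ← mem_toN, h]

/-- The uniform set associated to `A`: fill to size `n/2` along the symmetric chain. -/
noncomputable def MFill (n : ℕ) (A : Finset (Fin n)) : Finset (Fin n) :=
  Finset.univ.filter (fun i => (i : ℕ) ∈ chainTop n (toN A))

lemma toN_MFill {n : ℕ} (hev : Even n) {A : Finset (Fin n)} (hc : A.card ≤ n / 2) :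
    toN (MFill n A) = chainTop n (toN A) := by
  have h := (chainTop_props hev (toN_subset_range A) (by rwa [toN_card])).2.2
  ext j
  constructor
  · intro hj
    simp only [toN, Finset.mem_map, Function.Embedding.coeFn_mk] at hj
    obtain ⟨i, hi, rfl⟩ := hj
    simpa [MFill] using hi
  · intro hj
    have hjn : j < n := Finset.mem_range.1 (h hj)
    have : ((⟨j, hjn⟩ : Fin n) : ℕ) ∈ toN (MFill n A) := by
      rw [mem_toN]
      simp [MFill, hj]
    exact this

lemma subset_MFill {n : ℕ} (hev : Even n) {A : Finset (Fin n)} (hc : A.card ≤ n / 2) :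
    A ⊆ MFill n A := by
  intro i hi
  have h := (chainTop_props hev (toN_subset_range A) (by rwa [toN_card])).2.1
  simp only [MFill, Finset.mem_filter, Finset.mem_univ, true_and]
  exact h (mem_toN.2 hi)

lemma card_MFill {n : ℕ} (hev : Even n) {A : Finset (Fin n)} (hc : A.card ≤ n / 2) :
    (MFill n A).card = n / 2 := by
  rw [← toN_card, toN_MFill hev hc]
  exact (chainTop_props hev (toN_subset_range A) (by rwa [toN_card])).1

lemma MFill_cmp {n : ℕ} (hev : Even n) {A B : Finset (Fin n)}
    (hAB : A.card ≤ B.card) (hB : B.card ≤ n / 2)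
    (heq : MFill n A = MFill n B) : A ⊆ B := by
  have h : chainTop n (toN A) = chainTop n (toN B) := by
    rw [← toN_MFill hev (le_trans hAB hB), ← toN_MFill hev hB, heq]
  have := chainTop_cmp hev (toN_subset_range A) (toN_subset_range B)
    (by rwa [toN_card, toN_card]) (by rwa [toN_card]) h
  intro i hi
  exact mem_toN.1 (this (mem_toN.2 hi))

lemma pair_compl_ne_self {n : ℕ} {C : Finset (Fin n)} (h1 : C.Nonempty) : C ≠ Cᶜ := by
  intro h
  obtain ⟨a, ha⟩ := h1
  have := h ▸ ha
  simp only [Finset.mem_compl] at this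
  exact this ha

/-- The two-class partition `{C, Cᶜ}`. -/
def pairPart {n : ℕ} (C : Finset (Fin n)) (h1 : C.Nonempty) (h2 : Cᶜ.Nonempty) :
    Finpartition (Finset.univ : Finset (Fin n)) where
  parts := {C, Cᶜ}
  supIndep := by
    rw [Finset.supIndep_pair (pair_compl_ne_self h1)]
    exact disjoint_compl_right
  sup_parts := by
    simp only [Finset.sup_insert, Finset.sup_singleton, id, sup_compl_eq_top]
    rfl
  bot_notMem := by
    simp only [Finset.mem_insert, Finset.mem_singleton]
    push_neg
    constructor
    · exact fun h => h1.ne_empty h.symm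
    · exact fun h => h2.ne_empty h.symm

lemma pairPart_parts {n : ℕ} (C : Finset (Fin n)) (h1 : C.Nonempty) (h2 : Cᶜ.Nonempty) :
    (pairPart C h1 h2).parts = {C, Cᶜ} := rfl

/-- Any 2-part finpartition of `univ` has parts `{A, Aᶜ}`. -/
lemma parts_eq_pair {n : ℕ} (P : Finpartition (Finset.univ : Finset (Fin n)))
    (h2 : P.parts.card = 2) : ∃ A : Finset (Fin n), P.parts = {A, Aᶜ} := by
  obtain ⟨A, B, hAB, hparts⟩ := Finset.card_eq_two.1 h2
  refine ⟨A, ?_⟩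
  have hdisj : Disjoint A B := by
    have := P.supIndep
    rw [hparts, Finset.supIndep_pair hAB] at this
    exact this
  have hsup : A ⊔ B = ⊤ := by
    have := P.sup_parts
    simp only [hparts, Finset.sup_insert, Finset.sup_singleton, id] at this
    exact this
  have : B = Aᶜ := by
    have hc : IsCompl A B := ⟨hdisj, codisjoint_iff.2 hsup⟩
    exact (hc.compl_eq).symm
  rw [hparts, this]

lemma mem_parts_compl {n : ℕ} {P : Finpartition (Finset.univ : Finset (Fin n))}
    {A S : Finset (Fin n)} (hparts : P.parts = {A, Aᶜ}) (hS : S ∈ P.parts) :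
    Sᶜ ∈ P.parts := by
  rw [hparts] at hS ⊢
  simp only [Finset.mem_insert, Finset.mem_singleton] at hS ⊢
  rcases hS with rfl | rfl
  · right; rfl
  · left; rw [compl_compl]

lemma parts_eq_pair_of_mem {n : ℕ} {P : Finpartition (Finset.univ : Finset (Fin n))}
    (h2 : P.parts.card = 2) {S : Finset (Fin n)} (hS : S ∈ P.parts) :
    P.parts = {S, Sᶜ} := by
  obtain ⟨A, hp⟩ := parts_eq_pair P h2
  rw [hp] at hS
  simp only [Finset.mem_insert, Finset.mem_singleton] at hS
  rcases hS with rfl | rfl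
  · exact hp
  · rw [hp, compl_compl, Finset.pair_comm]

lemma uniform_card_compl {n : ℕ} (hev : Even n) {A : Finset (Fin n)}
    (h : A.card = n / 2) : Aᶜ.card = n / 2 := by
  rw [Finset.card_compl, Fintype.card_fin, h]
  obtain ⟨m, hm⟩ := hev
  omega

/-- Completeness: distinct uniform vertices are adjacent. -/
lemma uniform_complete {n : ℕ} (hn : 4 ≤ n) (hev : Even n)
    (P Q : QIVertex n 2) (hP : P ∈ UniformVerts n) (hQ : Q ∈ UniformVerts n)
    (hne : P ≠ Q) : (QIGraph n 2).Adj P Q := by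
  rw [QIGraph, SimpleGraph.fromRel_adj]
  refine ⟨hne, Or.inl ?_⟩
  intro A hA B hB
  rw [Finset.nonempty_iff_ne_empty]
  intro hAB
  have hsub : A ⊆ Bᶜ := fun x hx => by
    rw [Finset.mem_compl]
    intro hxB
    have : x ∈ A ∩ B := Finset.mem_inter.2 ⟨hx, hxB⟩
    rw [hAB] at this
    exact absurd this (Finset.notMem_empty x)
  have hcards : A.card = Bᶜ.card := by
    rw [hP A hA, uniform_card_compl hev (hQ B hB)]
  have hABc : A = Bᶜ := Finset.eq_of_subset_of_card_le hsub (le_of_eq hcards.symm)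
  have hPparts : P.1.parts = {A, Aᶜ} := parts_eq_pair_of_mem P.2.1 hA
  have hQparts : Q.1.parts = {B, Bᶜ} := parts_eq_pair_of_mem Q.2.1 hB
  apply hne
  apply Subtype.ext
  apply Finpartition.ext
  rw [hPparts, hQparts, hABc, compl_compl, Finset.pair_comm]

/-- A uniform vertex built from a set of size `n/2`. -/
noncomputable def uvert {n : ℕ} (hn : 4 ≤ n) (hev : Even n) (C : Finset (Fin n))
    (hC : C.card = n / 2) : QIVertex n 2 := by
  have hc' : Cᶜ.card = n / 2 := uniform_card_compl hev hC
  have h1 : C.Nonempty := Finset.card_pos.1 (by omega)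
  have h2 : Cᶜ.Nonempty := Finset.card_pos.1 (by omega)
  refine ⟨pairPart C h1 h2, ?_, ?_⟩
  · rw [pairPart_parts, Finset.card_insert_of_notMem (by
      simp only [Finset.mem_singleton]; exact pair_compl_ne_self h1),
      Finset.card_singleton]
  · intro A hA
    rw [pairPart_parts] at hA
    simp only [Finset.mem_insert, Finset.mem_singleton] at hA
    rcases hA with rfl | rfl <;> omega

lemma uvert_parts {n : ℕ} (hn : 4 ≤ n) (hev : Even n) (C : Finset (Fin n))
    (hC : C.card = n / 2) : (uvert hn hev C hC).1.parts = {C, Cᶜ} := rfl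

lemma uvert_mem {n : ℕ} (hn : 4 ≤ n) (hev : Even n) (C : Finset (Fin n))
    (hC : C.card = n / 2) : uvert hn hev C hC ∈ UniformVerts n := by
  intro A hA
  rw [uvert_parts] at hA
  simp only [Finset.mem_insert, Finset.mem_singleton] at hA
  rcases hA with rfl | rfl
  · exact hC
  · exact uniform_card_compl hev hC

/-- The class of `P` of size at most `n/2` (choice-based). -/
noncomputable def smallSide (n : ℕ) (P : QIVertex n 2) : Finset (Fin n) :=
  if h : ∃ A, A ∈ P.1.parts ∧ A.card ≤ n / 2 then h.choose else ∅

lemma smallSide_spec {n : ℕ} (hev : Even n) (P : QIVertex n 2) :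
    smallSide n P ∈ P.1.parts ∧ (smallSide n P).card ≤ n / 2 := by
  have h : ∃ A, A ∈ P.1.parts ∧ A.card ≤ n / 2 := by
    obtain ⟨A, hp⟩ := parts_eq_pair P.1 P.2.1
    by_cases hA : A.card ≤ n / 2
    · exact ⟨A, by rw [hp]; exact Finset.mem_insert_self _ _, hA⟩
    · refine ⟨Aᶜ, by rw [hp]; simp, ?_⟩
      rw [Finset.card_compl, Fintype.card_fin]
      obtain ⟨m, hm⟩ := hev
      omega
  rw [smallSide, dif_pos h]
  exact h.choose_spec

/-- The retraction to uniform vertices. -/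
noncomputable def retr {n : ℕ} (hn : 4 ≤ n) (hev : Even n) (P : QIVertex n 2) :
    QIVertex n 2 :=
  uvert hn hev (MFill n (smallSide n P)) (card_MFill hev (smallSide_spec hev P).2)

lemma retr_mem {n : ℕ} (hn : 4 ≤ n) (hev : Even n) (P : QIVertex n 2) :
    retr hn hev P ∈ UniformVerts n := uvert_mem hn hev _ _

lemma not_adj_of_retr_eq {n : ℕ} (hn : 4 ≤ n) (hev : Even n) {P Q : QIVertex n 2}
    (h : retr hn hev P = retr hn hev Q) : ¬ (QIGraph n 2).Adj P Q := by
  intro hadj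
  rw [QIGraph, SimpleGraph.fromRel_adj] at hadj
  obtain ⟨hne, hqi⟩ := hadj
  set S := smallSide n P with hSdef
  set T := smallSide n Q with hTdef
  obtain ⟨hSmem, hScard⟩ := smallSide_spec hev P
  obtain ⟨hTmem, hTcard⟩ := smallSide_spec hev Q
  -- from `h`, the parts pairs coincide
  have hparts : ({MFill n S, (MFill n S)ᶜ} : Finset (Finset (Fin n)))
      = {MFill n T, (MFill n T)ᶜ} := by
    have := congrArg (fun R : QIVertex n 2 => R.1.parts) h
    simpa [retr, uvert_parts] using this
  have hcase : MFill n S = MFill n T ∨ MFill n S = (MFill n T)ᶜ := by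
    have : MFill n S ∈ ({MFill n T, (MFill n T)ᶜ} : Finset (Finset (Fin n))) := by
      rw [← hparts]; exact Finset.mem_insert_self _ _
    simpa using this
  -- produce an empty intersection between a part of P and a part of Q
  have hempty : ∃ A ∈ P.1.parts, ∃ B ∈ Q.1.parts, A ∩ B = ∅ := by
    rcases hcase with hMeq | hMc
    · rcases le_or_gt S.card T.card with hle | hlt
      · have hST : S ⊆ T := MFill_cmp hev hle hTcard hMeq
        refine ⟨S, hSmem, Tᶜ, mem_parts_compl (parts_eq_pair_of_mem Q.2.1 hTmem) hTmem, ?_⟩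
        ext x
        simp only [Finset.mem_inter, Finset.mem_compl, Finset.notMem_empty, iff_false]
        rintro ⟨hx1, hx2⟩
        exact hx2 (hST hx1)
      · have hTS : T ⊆ S := MFill_cmp hev (le_of_lt hlt) hScard hMeq.symm
        refine ⟨Sᶜ, mem_parts_compl (parts_eq_pair_of_mem P.2.1 hSmem) hSmem, T, hTmem, ?_⟩
        ext x
        simp only [Finset.mem_inter, Finset.mem_compl, Finset.notMem_empty, iff_false]
        rintro ⟨hx1, hx2⟩
        exact hx1 (hTS hx2)
    · refine ⟨S, hSmem, T, hTmem, ?_⟩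
      ext x
      simp only [Finset.mem_inter, Finset.notMem_empty, iff_false]
      rintro ⟨hx1, hx2⟩
      have h1 : x ∈ MFill n S := subset_MFill hev hScard hx1
      have h2 : x ∈ MFill n T := subset_MFill hev hTcard hx2
      rw [hMc, Finset.mem_compl] at h1
      exact h1 h2
  obtain ⟨A, hA, B, hB, hAB⟩ := hempty
  rcases hqi with hq | hq
  · have := hq A hA B hB
    rw [hAB] at this
    exact Finset.not_nonempty_empty this
  · have := hq B hB A hA
    rw [Finset.inter_comm, hAB] at this
    exact Finset.not_nonempty_empty this

lemma count_half (n : ℕ) (hn : 4 ≤ n) (hev : Even n) (z : Fin n) :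
    ((Finset.univ : Finset (Finset (Fin n))).filter
      (fun A => A.card = n / 2 ∧ z ∈ A)).card = n.choose (n / 2) / 2 := by
  classical
  have hcard12 : ((Finset.univ : Finset (Finset (Fin n))).filter
        (fun A => A.card = n / 2 ∧ z ∈ A)).card
      = ((Finset.univ : Finset (Finset (Fin n))).filter
        (fun A => A.card = n / 2 ∧ z ∉ A)).card := by
    refine Finset.card_bij' (fun A _ => Aᶜ) (fun B _ => Bᶜ) ?_ ?_
      (fun A _ => compl_compl A) (fun B _ => compl_compl B)
    · intro A hA
      simp only [Finset.mem_filter, Finset.mem_univ, true_and] at hA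
      simp only [Finset.mem_filter, Finset.mem_univ, true_and, Finset.mem_compl]
      exact ⟨uniform_card_compl hev hA.1, fun h => h hA.2⟩
    · intro B hB
      simp only [Finset.mem_filter, Finset.mem_univ, true_and] at hB
      simp only [Finset.mem_filter, Finset.mem_univ, true_and, Finset.mem_compl]
      exact ⟨uniform_card_compl hev hB.1, by simpa using hB.2⟩
  have hsplit : ((Finset.univ : Finset (Finset (Fin n))).filter
        (fun A => A.card = n / 2 ∧ z ∈ A)).card
      + ((Finset.univ : Finset (Finset (Fin n))).filter
        (fun A => A.card = n / 2 ∧ z ∉ A)).card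
      = ((Finset.univ : Finset (Finset (Fin n))).filter (fun A => A.card = n / 2)).card := by
    rw [show ((Finset.univ : Finset (Finset (Fin n))).filter
        (fun A => A.card = n / 2 ∧ z ∈ A))
      = ((Finset.univ : Finset (Finset (Fin n))).filter
        (fun A => A.card = n / 2)).filter (fun A => z ∈ A) from by
        rw [Finset.filter_filter]]
    rw [show ((Finset.univ : Finset (Finset (Fin n))).filter
        (fun A => A.card = n / 2 ∧ z ∉ A))
      = ((Finset.univ : Finset (Finset (Fin n))).filter
        (fun A => A.card = n / 2)).filter (fun A => z ∉ A) from by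
        rw [Finset.filter_filter]]
    exact Finset.card_filter_add_card_filter_not _
  have htot : ((Finset.univ : Finset (Finset (Fin n))).filter
      (fun A => A.card = n / 2)).card = n.choose (n / 2) := by
    have := Finset.card_powersetCard (n / 2) (Finset.univ : Finset (Fin n))
    rw [Finset.powersetCard_eq_filter, Finset.powerset_univ, Finset.card_univ,
      Fintype.card_fin] at this
    exact this
  omega

/-- The equivalence between uniform vertices and `n/2`-sets containing a fixed point. -/
noncomputable def uniformEquiv (n : ℕ) (hn : 4 ≤ n) (hev : Even n) :
    ↥(UniformVerts n) ≃ {A : Finset (Fin n) // A.card = n / 2 ∧ (⟨0, by omega⟩ : Fin n) ∈ A} where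
  toFun P := ⟨P.1.1.part ⟨0, by omega⟩,
    P.2 _ (P.1.1.part_mem.2 (Finset.mem_univ _)),
    P.1.1.mem_part (Finset.mem_univ _)⟩
  invFun A := ⟨uvert hn hev A.1 A.2.1, uvert_mem hn hev A.1 A.2.1⟩
  left_inv P := by
    apply Subtype.ext
    apply Subtype.ext
    apply Finpartition.ext
    rw [uvert_parts]
    exact (parts_eq_pair_of_mem P.1.2.1 (P.1.1.part_mem.2 (Finset.mem_univ _))).symm
  right_inv A := by
    apply Subtype.ext
    exact (uvert hn hev A.1 A.2.1).1.part_eq_of_mem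
      (by rw [uvert_parts]; exact Finset.mem_insert_self _ _) A.2.2


/-- For even `n ≥ 4`, the subgraph of `QI(n,2)` induced by the uniform
2-partitions is a complete graph on `(1/2)·C(n, n/2)` vertices, and it is a core
of `QI(n,2)`: there is a homomorphism from `QI(n,2)` onto it, and every
endomorphism of it is an automorphism. -/
theorem uniform_core_QIGraph_two (n : ℕ) (hn : 4 ≤ n) (hev : Even n) :
    (∀ P Q : QIVertex n 2, P ∈ UniformVerts n → Q ∈ UniformVerts n → P ≠ Q →
        (QIGraph n 2).Adj P Q) ∧
    Nat.card (UniformVerts n) = n.choose (n / 2) / 2 ∧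
    Nonempty (QIGraph n 2 →g (QIGraph n 2).induce (UniformVerts n)) ∧
    (∀ φ : (QIGraph n 2).induce (UniformVerts n) →g
        (QIGraph n 2).induce (UniformVerts n), Function.Bijective φ) := by
  haveI : Finite (QIVertex n 2) := inferInstanceAs
    (Finite {P : Finpartition (Finset.univ : Finset (Fin n)) //
      P.parts.card = 2 ∧ ∀ A ∈ P.parts, 2 ≤ A.card})
  refine ⟨uniform_complete hn hev, ?_, ?_, ?_⟩
  · rw [Nat.card_congr (uniformEquiv n hn hev), Nat.card_eq_fintype_card,
      Fintype.card_subtype]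
    exact count_half n hn hev _
  · refine ⟨⟨fun P => ⟨retr hn hev P, retr_mem hn hev P⟩, ?_⟩⟩
    intro P Q hadj
    have hne : retr hn hev P ≠ retr hn hev Q :=
      fun h => not_adj_of_retr_eq hn hev h hadj
    exact uniform_complete hn hev _ _ (retr_mem hn hev P) (retr_mem hn hev Q) hne
  · intro φ
    haveI : Finite ↥(UniformVerts n) := Subtype.finite
    have hinj : Function.Injective φ := by
      intro a b hab
      by_contra hne
      have hadj : ((QIGraph n 2).induce (UniformVerts n)).Adj a b :=
        uniform_complete hn hev a.1 b.1 a.2 b.2 (fun h => hne (Subtype.ext h))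
      have hab' : φ.toFun a = φ.toFun b := hab
      have := φ.map_rel' hadj
      rw [hab'] at this
      exact ((QIGraph n 2).induce (UniformVerts n)).irrefl this
    exact Finite.injective_iff_bijective.1 hinj
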